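/- The smoothed ℓ0 function S_σ(x) = Σ_{i=1}^N (1 − exp(−xᵢ²/(2σ²))) on ℝ^N is convex on the box {x : ‖x‖_∞ ≤ x_m} whenever σ ≥ x_m. -/

import Mathlib

open Set Real

private lemma convexOn_finset_sum {ι E : Type*} [AddCommGroup E] [Module ℝ E]
    {s : Set E} (hs : Convex ℝ s) (t : Finset ι) {f : ι → E → ℝ}
    (hf : ∀ i ∈ t, ConvexOn ℝ s (f i)) :
    ConvexOn ℝ s (fun x => ∑ i ∈ t, f i x) := by
  classical
  induction t using Finset.induction_on with
  | empty => simpa using convexOn_const 0 hs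
  | @insert a t' hnot ih =>
    simp only [Finset.sum_insert hnot]
    exact (hf a (Finset.mem_insert_self a t')).add
      (ih fun i hi => hf i (Finset.mem_insert_of_mem hi))

private lemma oneDim_convex (σ xm : ℝ) (hσ : 0 < σ) (hxm : 0 ≤ xm) (h : σ ≥ xm) :
    ConvexOn ℝ (Set.Icc (-xm) xm) (fun t : ℝ => 1 - Real.exp (-t ^ 2 / (2 * σ ^ 2))) := by
  have hσ2 : (2 * σ ^ 2) ≠ 0 := by positivity
  set f : ℝ → ℝ := fun t => 1 - Real.exp (-t ^ 2 / (2 * σ ^ 2)) with hf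
  set g : ℝ → ℝ := fun t => (t / σ ^ 2) * Real.exp (-t ^ 2 / (2 * σ ^ 2)) with hg
  set g2 : ℝ → ℝ := fun t => ((σ ^ 2 - t ^ 2) / σ ^ 4) * Real.exp (-t ^ 2 / (2 * σ ^ 2)) with hg2
  have hinner : ∀ t : ℝ, HasDerivAt (fun t : ℝ => -t ^ 2 / (2 * σ ^ 2))
      (-(2 * t) / (2 * σ ^ 2)) t := by
    intro t
    have := ((hasDerivAt_pow 2 t).neg.div_const (2 * σ ^ 2))
    simpa using this
  have hf' : ∀ t : ℝ, HasDerivAt f (g t) t := by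
    intro t
    have h1 := ((hinner t).exp).const_sub 1
    refine h1.congr_deriv ?_
    simp only [hg]
    field_simp
  have hg' : ∀ t : ℝ, HasDerivAt g (g2 t) t := by
    intro t
    have h1 : HasDerivAt (fun t : ℝ => t / σ ^ 2) (1 / σ ^ 2) t := by
      simpa using (hasDerivAt_id t).div_const (σ ^ 2)
    have h2 := h1.mul ((hinner t).exp)
    refine h2.congr_deriv ?_
    simp only [hg2]
    have hexp : Real.exp (-t ^ 2 / (2 * σ ^ 2)) = Real.exp (-t ^ 2 / (2 * σ ^ 2)) := rfl
    field_simp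
    ring
  apply convexOn_of_hasDerivWithinAt2_nonneg (f' := g) (f'' := g2) (convex_Icc _ _)
  · exact (Continuous.continuousOn (by continuity))
  · exact fun t _ => (hf' t).hasDerivWithinAt
  · exact fun t _ => (hg' t).hasDerivWithinAt
  · intro t ht
    have ht' : t ∈ Set.Icc (-xm) xm := interior_subset ht
    have habs : |t| ≤ σ := le_trans (abs_le.2 ⟨ht'.1, ht'.2⟩) h
    have ht2 : t ^ 2 ≤ σ ^ 2 := by
      have := sq_abs t ▸ pow_le_pow_left₀ (abs_nonneg t) habs 2
      simpa [sq_abs] using this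
    have : 0 ≤ (σ ^ 2 - t ^ 2) / σ ^ 4 := by
      apply div_nonneg (by linarith) (by positivity)
    exact mul_nonneg this (Real.exp_pos _).le

theorem sl0_convexOn_box (N : ℕ) (σ xm : ℝ) (hσ : 0 < σ) (hxm : 0 ≤ xm) (h : σ ≥ xm) :
    ConvexOn ℝ {x : Fin N → ℝ | ∀ i, |x i| ≤ xm}
      (fun x => ∑ i : Fin N, (1 - Real.exp (-(x i) ^ 2 / (2 * σ ^ 2)))) := by
  have hSconv : Convex ℝ {x : Fin N → ℝ | ∀ i, |x i| ≤ xm} := by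
    intro x hx y hy a b ha hb hab
    intro i
    calc |a * x i + b * y i| ≤ |a * x i| + |b * y i| := abs_add_le _ _
      _ = a * |x i| + b * |y i| := by rw [abs_mul, abs_mul, abs_of_nonneg ha, abs_of_nonneg hb]
      _ ≤ a * xm + b * xm := by
          apply add_le_add (mul_le_mul_of_nonneg_left (hx i) ha)
            (mul_le_mul_of_nonneg_left (hy i) hb)
      _ = xm := by rw [← add_mul, hab, one_mul]
  apply convexOn_finset_sum hSconv
  intro i _
  have h1 := (oneDim_convex σ xm hσ hxm h).comp_linearMap (LinearMap.proj (R := ℝ) (φ := fun _ : Fin N => ℝ) i)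
  refine h1.subset (fun x hx => ?_) hSconv
  simp only [Set.mem_preimage, LinearMap.proj_apply]
  exact abs_le.1 (hx i)
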